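/- Let ρ = (1/2)(I + x σ_x + y σ_y + z σ_z) be a 2×2 density matrix given by a Bloch vector (x, y, z) with x² + y² + z² ≤ 1 (σ_x, σ_y, σ_z the Pauli matrices with σ_z = diag(1, −1)), and let H = diag(0, ω) with ω > 0. Then the ergotropy of ρ, i.e., the maximum over 2×2 unitaries V of Tr[(H − V†HV) ρ], equals (ω/2)(√(x² + y² + z²) − z). Setting x = y = 0 in the variational problem gives the incoherent ergotropy R_I = (ω/2)(|z| − z), and the coherent ergotropy is R_C = (ω/2)(√(x² + y² + z²) − |z|). -/

import Mathlib

open Matrix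

lemma key_trace (x y z ω : ℝ) (V : Matrix (Fin 2) (Fin 2) ℂ) :
    ((!![0, 0; 0, (ω : ℂ)] - Vᴴ * !![0, 0; 0, (ω : ℂ)] * V) *
      ((1 / 2 : ℂ) • (1 + (x : ℂ) • !![0, 1; 1, 0]
        + (y : ℂ) • !![0, -Complex.I; Complex.I, 0]
        + (z : ℂ) • !![1, 0; 0, -1]))).trace
    = Complex.ofReal (ω / 2 * (1 - z)
        - ω * ( ((V 1 0).re ^ 2 + (V 1 0).im ^ 2) * (1 + z) / 2
          + ((V 1 1).re ^ 2 + (V 1 1).im ^ 2) * (1 - z) / 2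
          + x * ((V 1 0).re * (V 1 1).re + (V 1 0).im * (V 1 1).im)
          - y * ((V 1 0).re * (V 1 1).im - (V 1 0).im * (V 1 1).re))) := by
  simp only [Matrix.trace_fin_two, Matrix.mul_apply, Fin.sum_univ_two, Matrix.sub_apply,
    Matrix.smul_apply, Matrix.add_apply, Matrix.one_apply, Matrix.conjTranspose_apply,
    Matrix.cons_val', Matrix.cons_val_zero, Matrix.cons_val_one, Matrix.head_cons,
    Matrix.head_fin_const, Matrix.empty_val', Matrix.cons_val_fin_one]
  apply Complex.ext <;>
    simp [Complex.add_re, Complex.add_im, Complex.mul_re, Complex.mul_im, Complex.sub_re,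
      Complex.sub_im, Complex.ofReal_re, Complex.ofReal_im, Complex.one_re, Complex.one_im,
      Complex.I_re, Complex.I_im, Complex.conj_re, Complex.conj_im, Complex.div_re,
      Complex.div_im, Complex.normSq, ← Complex.ofReal_pow] <;> ring

lemma row_norm (V : Matrix (Fin 2) (Fin 2) ℂ) (hV : V ∈ Matrix.unitaryGroup (Fin 2) ℂ) :
    (V 1 0).re ^ 2 + (V 1 0).im ^ 2 + ((V 1 1).re ^ 2 + (V 1 1).im ^ 2) = 1 := by
  have h := Matrix.mem_unitaryGroup_iff.mp hV
  have h11 : (V * star V) 1 1 = (1 : Matrix (Fin 2) (Fin 2) ℂ) 1 1 := by rw [h]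
  simp only [Matrix.mul_apply, Fin.sum_univ_two, Matrix.star_apply, Matrix.one_apply_eq,
    RCLike.star_def] at h11
  have h2 := congrArg Complex.re h11
  simp only [Complex.add_re, Complex.mul_re, Complex.conj_re, Complex.conj_im,
    Complex.one_re] at h2
  nlinarith [h2]

lemma cs_ineq (x y z A B C D r : ℝ) (hS : A^2+B^2+C^2+D^2 = 1) (hr0 : 0 ≤ r)
    (hr2 : r^2 = x^2+y^2+z^2) :
    -(z*(A^2+B^2-C^2-D^2) + 2*x*(A*C+B*D) - 2*y*(A*D-B*C)) ≤ r := by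
  set p := 2*(A*C+B*D) with hp
  set q := -(2*(A*D-B*C)) with hq
  set t := A^2+B^2-C^2-D^2 with ht
  have hnorm : p^2 + q^2 + t^2 = 1 := by
    have : p^2+q^2+t^2 = (A^2+B^2+C^2+D^2)^2 := by rw [hp, hq, ht]; ring
    rw [this, hS]; norm_num
  have hs2 : (x*p + y*q + z*t)^2 ≤ r^2 := by
    nlinarith [sq_nonneg (x*q - y*p), sq_nonneg (x*t - z*p), sq_nonneg (y*t - z*q)]
  have hle : -(x*p + y*q + z*t) ≤ r := by nlinarith [sq_nonneg (r + (x*p+y*q+z*t))]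
  calc -(z*t + 2*x*(A*C+B*D) - 2*y*(A*D-B*C)) = -(x*p + y*q + z*t) := by rw [hp, hq]; ring
    _ ≤ r := hle

lemma upper_bound (x y z ω : ℝ) (hω : 0 < ω) (r : ℝ) (hr0 : 0 ≤ r)
    (hr2 : r^2 = x^2+y^2+z^2) (w : ℝ) (V : Matrix (Fin 2) (Fin 2) ℂ)
    (hV : V ∈ Matrix.unitaryGroup (Fin 2) ℂ)
    (htr : ((!![0, 0; 0, (ω : ℂ)] - Vᴴ * !![0, 0; 0, (ω : ℂ)] * V) *
      ((1 / 2 : ℂ) • (1 + (x : ℂ) • !![0, 1; 1, 0]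
        + (y : ℂ) • !![0, -Complex.I; Complex.I, 0]
        + (z : ℂ) • !![1, 0; 0, -1]))).trace = (w : ℂ)) :
    w ≤ ω / 2 * (r - z) := by
  rw [key_trace] at htr
  have hw := Complex.ofReal_inj.mp htr
  set A := (V 1 0).re; set B := (V 1 0).im; set C := (V 1 1).re; set D := (V 1 1).im
  have hS : A^2+B^2+C^2+D^2 = 1 := by have := row_norm V hV; linarith
  have hkey := cs_ineq x y z A B C D r hS hr0 hr2
  have h1 : 0 ≤ (z*(A^2+B^2-C^2-D^2) + 2*x*(A*C+B*D) - 2*y*(A*D-B*C)) + r := by linarith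
  have hw2 : w = ω/2 * (-z - (z*(A^2+B^2-C^2-D^2) + 2*x*(A*C+B*D) - 2*y*(A*D-B*C))) := by
    rw [← hw]; linear_combination (-(ω/2)) * hS
  rw [hw2]
  nlinarith [mul_nonneg hω.le h1]

lemma sigmax_unitary : !![(0:ℂ), 1; 1, 0] ∈ Matrix.unitaryGroup (Fin 2) ℂ := by
  rw [Matrix.mem_unitaryGroup_iff]
  ext i j
  fin_cases i <;> fin_cases j <;>
    simp [Matrix.mul_apply, Fin.sum_univ_two, Matrix.star_apply, Matrix.one_apply]

lemma opt_unitary (x y z r N : ℝ) (hN0 : 0 < N) (hN2 : N^2 = 2*r*(r+z))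
    (hr2 : r^2 = x^2+y^2+z^2) :
    !![(⟨-(z+r)/N, 0⟩:ℂ), ⟨-x/N, y/N⟩; ⟨x/N, y/N⟩, ⟨-(z+r)/N, 0⟩]
      ∈ Matrix.unitaryGroup (Fin 2) ℂ := by
  have hN : N ≠ 0 := ne_of_gt hN0
  rw [Matrix.mem_unitaryGroup_iff]
  ext i j
  fin_cases i <;> fin_cases j <;> (apply Complex.ext) <;>
    (simp [Matrix.mul_apply, Fin.sum_univ_two, Matrix.star_apply, Matrix.one_apply,
        Complex.mul_re, Complex.mul_im, Complex.conj_re, Complex.conj_im,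
        Complex.add_re, Complex.add_im]) <;>
    (try field_simp) <;> (first | linear_combination -hN2 - hr2 | ring)

set_option maxHeartbeats 1000000 in
/-- For a qubit with Bloch vector `(x, y, z)` and Hamiltonian
`H = diag(0, ω)` with `ω > 0`, the ergotropy equals `(ω/2)(√(x²+y²+z²) - z)`; the
incoherent ergotropy (obtained by setting `x = y = 0`, i.e. from the dephased state)
equals `(ω/2)(|z| - z)`, and the coherent ergotropy is `(ω/2)(√(x²+y²+z²) - |z|)`. -/
theorem stmt_11 (x y z ω : ℝ) (hball : x ^ 2 + y ^ 2 + z ^ 2 ≤ 1) (hω : 0 < ω) :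
    let σx : Matrix (Fin 2) (Fin 2) ℂ := !![0, 1; 1, 0]
    let σy : Matrix (Fin 2) (Fin 2) ℂ := !![0, -Complex.I; Complex.I, 0]
    let σz : Matrix (Fin 2) (Fin 2) ℂ := !![1, 0; 0, -1]
    let ρ : Matrix (Fin 2) (Fin 2) ℂ :=
      (1 / 2 : ℂ) • (1 + (x : ℂ) • σx + (y : ℂ) • σy + (z : ℂ) • σz)
    let ρdeph : Matrix (Fin 2) (Fin 2) ℂ := (1 / 2 : ℂ) • (1 + (z : ℂ) • σz)
    let H : Matrix (Fin 2) (Fin 2) ℂ := !![0, 0; 0, (ω : ℂ)]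
    IsGreatest {w : ℝ | ∃ V ∈ Matrix.unitaryGroup (Fin 2) ℂ,
        ((H - Vᴴ * H * V) * ρ).trace = (w : ℂ)}
      (ω / 2 * (Real.sqrt (x ^ 2 + y ^ 2 + z ^ 2) - z))
    ∧ IsGreatest {w : ℝ | ∃ V ∈ Matrix.unitaryGroup (Fin 2) ℂ,
        ((H - Vᴴ * H * V) * ρdeph).trace = (w : ℂ)}
      (ω / 2 * (|z| - z))
    ∧ ω / 2 * (Real.sqrt (x ^ 2 + y ^ 2 + z ^ 2) - z) - ω / 2 * (|z| - z)
      = ω / 2 * (Real.sqrt (x ^ 2 + y ^ 2 + z ^ 2) - |z|) := by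
  intro σx σy σz ρ ρdeph H
  set r := Real.sqrt (x ^ 2 + y ^ 2 + z ^ 2) with hrdef
  clear_value r
  have hsum0 : (0:ℝ) ≤ x ^ 2 + y ^ 2 + z ^ 2 := by positivity
  have hr0 : 0 ≤ r := by rw [hrdef]; positivity
  have hr2 : r ^ 2 = x ^ 2 + y ^ 2 + z ^ 2 := by rw [hrdef]; exact Real.sq_sqrt hsum0
  have hmat : ρdeph = (1 / 2 : ℂ) • (1 + ((0:ℝ) : ℂ) • σx + ((0:ℝ) : ℂ) • σy + (z : ℂ) • σz) := by
    unfold ρdeph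
    norm_num
  refine ⟨⟨?_, ?_⟩, ⟨?_, ?_⟩, by ring⟩
  · -- membership, ergotropy
    simp only [Set.mem_setOf_eq]
    rcases le_or_gt (r + z) 0 with hrz | hrz
    · -- degenerate case : x = y = 0, r = -z
      have hzr : r = -z := by nlinarith [sq_nonneg x, sq_nonneg y]
      have hx : x = 0 := by nlinarith
      have hy : y = 0 := by nlinarith
      refine ⟨!![(0:ℂ), 1; 1, 0], sigmax_unitary, ?_⟩
      unfold H ρ σx σy σz
      rw [key_trace x y z ω, Complex.ofReal_inj]
      simp [Matrix.cons_val_one, Matrix.cons_val_zero, Matrix.head_cons]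
      linear_combination (-(ω/2)) * hzr
    · -- generic case
      have hrpos : 0 < r := by nlinarith [sq_nonneg x, sq_nonneg y]
      set N := Real.sqrt (2*r*(r+z)) with hNdef
      have hN2 : N ^ 2 = 2*r*(r+z) := Real.sq_sqrt (by positivity)
      have hN0 : 0 < N := Real.sqrt_pos.mpr (by positivity)
      clear_value N
      have hN : N ≠ 0 := ne_of_gt hN0
      refine ⟨!![(⟨-(z+r)/N, 0⟩:ℂ), ⟨-x/N, y/N⟩; ⟨x/N, y/N⟩, ⟨-(z+r)/N, 0⟩],
        opt_unitary x y z r N hN0 hN2 hr2, ?_⟩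
      unfold H ρ σx σy σz
      rw [key_trace x y z ω, Complex.ofReal_inj]
      norm_num [Matrix.cons_val', Matrix.cons_val_zero, Matrix.cons_val_one,
        Matrix.head_cons, Matrix.empty_val', Matrix.cons_val_fin_one, Matrix.head_fin_const]
      field_simp
      linear_combination (1 - z - 2*r) * hr2 + (1 - r) * hN2
  · -- upper bound, ergotropy
    rintro w ⟨V, hV, htr⟩
    unfold H ρ σx σy σz at htr
    exact upper_bound x y z ω hω r hr0 hr2 w V hV htr
  · -- membership, incoherent ergotropy
    simp only [Set.mem_setOf_eq]
    rcases le_or_gt 0 z with hz | hz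
    · refine ⟨1, Submonoid.one_mem _, ?_⟩
      rw [hmat]
      unfold H σx σy σz
      rw [key_trace 0 0 z ω, Complex.ofReal_inj]
      simp [Matrix.one_apply]
      rw [abs_of_nonneg hz]
      ring
    · refine ⟨!![(0:ℂ), 1; 1, 0], sigmax_unitary, ?_⟩
      rw [hmat]
      unfold H σx σy σz
      rw [key_trace 0 0 z ω, Complex.ofReal_inj]
      simp [Matrix.cons_val_one, Matrix.cons_val_zero, Matrix.head_cons]
      rw [abs_of_neg hz]
      ring
  · -- upper bound, incoherent ergotropy
    rintro w ⟨V, hV, htr⟩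
    rw [hmat] at htr
    unfold H σx σy σz at htr
    exact upper_bound 0 0 z ω hω |z| (abs_nonneg z) (by rw [sq_abs]; ring) w V hV htr
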